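/- Let h > 0 be real and θ ∈ ℝ. Over ℂ, let A be the 3×3 matrix (1/h²)·[[2, −1, 0], [−1, 2, −1], [0, −1, 2]], let Φ = diag(e^{−iθ}, 1, e^{iθ}), let W = (1/3)·I₃, and let V be the 3×1 column vector of ones. Then A is invertible with A⁻¹ = (h²/4)·[[3, 2, 1], [2, 4, 2], [1, 2, 3]], and the 1×1 matrix Vᵀ W Φ* A⁻¹ Φ V (where Φ* is the conjugate transpose of Φ) has its unique entry equal to (h²/12)(10 + 8cos θ + 2cos 2θ). -/

import Mathlib

open Matrix Complex

noncomputable def A17 (h : ℝ) : Matrix (Fin 3) (Fin 3) ℂ :=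
  (1 / (h ^ 2 : ℂ)) • !![2, -1, 0; -1, 2, -1; 0, -1, 2]

noncomputable def Phi17 (θ : ℝ) : Matrix (Fin 3) (Fin 3) ℂ :=
  diagonal ![exp (-(I * θ)), 1, exp (I * θ)]

noncomputable def W17 : Matrix (Fin 3) (Fin 3) ℂ := (1 / 3 : ℂ) • 1

def V17 : Matrix (Fin 3) (Fin 1) ℂ := fun _ _ => 1

set_option maxHeartbeats 4000000 in
theorem stmt_17 (h θ : ℝ) (hh : 0 < h) :
    IsUnit (A17 h) ∧
    (A17 h)⁻¹ = ((h ^ 2 : ℂ) / 4) • !![3, 2, 1; 2, 4, 2; 1, 2, 3] ∧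
    (V17ᵀ * W17 * (Phi17 θ)ᴴ * (A17 h)⁻¹ * Phi17 θ * V17) 0 0 =
      ((h ^ 2 : ℂ) / 12) * (10 + 8 * (Real.cos θ : ℂ) + 2 * (Real.cos (2 * θ) : ℂ)) := by
  have hh2 : (h : ℂ) ^ 2 ≠ 0 := by
    simpa using pow_ne_zero 2 (Complex.ofReal_ne_zero.mpr hh.ne')
  have hmul : A17 h * (((h ^ 2 : ℂ) / 4) • !![3, 2, 1; 2, 4, 2; 1, 2, 3]) = 1 := by
    unfold A17
    ext i j
    fin_cases i <;> fin_cases j <;>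
      simp [Matrix.mul_apply, Fin.sum_univ_succ] <;> field_simp [Complex.ofReal_ne_zero.mpr hh.ne'] <;> ring
  have hunit : IsUnit (A17 h) := (Matrix.isUnit_iff_isUnit_det _).mpr (Matrix.isUnit_det_of_right_inverse hmul)
  have hinv : (A17 h)⁻¹ = ((h ^ 2 : ℂ) / 4) • !![3, 2, 1; 2, 4, 2; 1, 2, 3] :=
    inv_eq_right_inv hmul
  refine ⟨hunit, hinv, ?_⟩
  rw [hinv]
  have he : Complex.exp (I * θ) ≠ 0 := Complex.exp_ne_zero _
  have hst : (starRingEnd ℂ) (Complex.exp (I * θ)) = Complex.exp (-(I * θ)) := by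
    rw [← Complex.exp_conj]; simp
  have hst2 : (starRingEnd ℂ) (Complex.exp (-(I * θ))) = Complex.exp (I * θ) := by
    rw [← Complex.exp_conj]; simp
  have hc1 : (Real.cos θ : ℂ) = (exp (I * θ) + exp (-(I * θ))) / 2 := by
    rw [Complex.ofReal_cos, Complex.cos]; ring_nf
  have hc2 : (Real.cos (2 * θ) : ℂ) = (exp (I * θ) * exp (I * θ) + exp (-(I * θ)) * exp (-(I * θ))) / 2 := by
    rw [Complex.ofReal_cos, Complex.cos, ← Complex.exp_add, ← Complex.exp_add]
    push_cast; ring_nf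
  rw [hc1, hc2]
  simp only [V17, W17, Phi17, Matrix.mul_apply, Fin.sum_univ_succ, Fin.sum_univ_zero,
    Matrix.transpose_apply, Matrix.conjTranspose_apply, Matrix.diagonal_apply,
    Matrix.smul_apply, Matrix.one_apply, Matrix.cons_val', Matrix.cons_val_zero,
    Matrix.cons_val_one, Matrix.head_cons, Matrix.head_fin_const, Matrix.empty_val',
    Matrix.cons_val_fin_one, Matrix.of_apply, smul_eq_mul,
    Fin.isValue, Matrix.cons_val_two, Matrix.tail_cons, hst, hst2]
  norm_num [Fin.ext_iff, Fin.succ_zero_eq_one, Fin.succ_one_eq_two, Matrix.cons_val_two, Matrix.tail_cons, Matrix.head_cons]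
  simp only [map_inv₀, hst, Complex.exp_neg, inv_inv]
  field_simp [he]
  have h1 : cexp (I * (θ:ℂ)) * (cexp (I * (θ:ℂ)))⁻¹ = 1 := mul_inv_cancel₀ he
  set x := cexp (I * (θ:ℂ)) with hxdef
  linear_combination
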